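/- arXiv:1108.3588 — 2 statements merged into one kernel-verified Lean document; each statement's English description precedes it below -/
import Mathlib

section
/- If D is bipartite, then B is signable and moreover B_{i,j} ≤ |(B⁻¹)_{i,j}| for all i < j (i.e., D is a subgraph of its parity closure D⁺). -/
open Matrix

/-- A square integer matrix `M` is *signable* if there is a signing vector `s`
(valued in `{+1, -1}`) with `s i * M i j * s j = |M i j|` for all `i, j`. -/
def IsSignable {k : ℕ} (M : Matrix (Fin k) (Fin k) ℤ) : Prop :=
  ∃ s : Fin k → ℤ, (∀ i, s i = 1 ∨ s i = -1) ∧ ∀ i j, s i * M i j * s j = |M i j|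

/-- `{i, j}` is an edge of the maximal-path subgraph `Γ_D` of the digraph `D` with
adjacency matrix `B - 1`: there is an edge from `i` to `j` and no directed path
of length `≥ 2` from `i` to `j`. -/
def GammaEdge {k : ℕ} (B : Matrix (Fin k) (Fin k) ℤ) (i j : Fin k) : Prop :=
  i < j ∧ 1 ≤ B i j ∧ ∀ m : ℕ, 2 ≤ m → ((B - 1) ^ m) i j = 0

/-- The maximal-path subgraph `Γ_D` is bipartite. -/
def GammaBipartite {k : ℕ} (B : Matrix (Fin k) (Fin k) ℤ) : Prop :=
  ∃ c : Fin k → Bool, ∀ i j : Fin k, GammaEdge B i j → c i ≠ c j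

open Classical in
/-- The pairing `⟨i,j⟩`: it is `1` on the diagonal, `(-1)^ℓ(i,j)` where `ℓ(i,j)` is the
length of a longest directed path from `i` to `j` when such a path exists, and `0`
otherwise. -/
noncomputable def pairing {k : ℕ} (B : Matrix (Fin k) (Fin k) ℤ) (i j : Fin k) : ℤ :=
  if i = j then 1
  else if ∃ m : ℕ, 1 ≤ m ∧ ((B - 1) ^ m) i j ≠ 0 then
    (-1 : ℤ) ^ sSup {m : ℕ | 1 ≤ m ∧ ((B - 1) ^ m) i j ≠ 0}
  else 0

/-- `B⁽ᵛ⁾`: the matrix obtained from `B` by replacing every off-diagonal entry in row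
`v` and in column `v` by `0` (deleting the vertex `v` from the digraph). -/
def vertexDelete {k : ℕ} (B : Matrix (Fin k) (Fin k) ℤ) (v : Fin k) :
    Matrix (Fin k) (Fin k) ℤ :=
  Matrix.of fun i j => if i ≠ j ∧ (i = v ∨ j = v) then 0 else B i j

/-- `(i,j)` is a zero pair: no directed path from `i` to `j`. -/
def ZeroPair {k : ℕ} (B : Matrix (Fin k) (Fin k) ℤ) (i j : Fin k) : Prop :=
  ∀ m : ℕ, 1 ≤ m → ((B - 1) ^ m) i j = 0

/-- `(i,j)` is a unit pair: all directed paths from `i` to `j` have length one. -/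
def UnitPair {k : ℕ} (B : Matrix (Fin k) (Fin k) ℤ) (i j : Fin k) : Prop :=
  1 ≤ B i j ∧ ∀ m : ℕ, 2 ≤ m → ((B - 1) ^ m) i j = 0

/-- `(i,j)` is a composite pair: every directed path from `i` to `j` passes through
some fixed intermediate vertex `v`. -/
def CompositePair {k : ℕ} (B : Matrix (Fin k) (Fin k) ℤ) (i j : Fin k) : Prop :=
  ∃ v : Fin k, i < v ∧ v < j ∧ ∀ m : ℕ, 1 ≤ m → ((vertexDelete B v - 1) ^ m) i j = 0

/-- `(i,j)` is a prime pair: `i < j` and `(i,j)` is neither a zero pair, a unit pair,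
nor a composite pair. -/
def PrimePair {k : ℕ} (B : Matrix (Fin k) (Fin k) ℤ) (i j : Fin k) : Prop :=
  i < j ∧ ¬ZeroPair B i j ∧ ¬UnitPair B i j ∧ ¬CompositePair B i j

section Aux

variable {n : ℕ} (B : Matrix (Fin n) (Fin n) ℤ)

lemma stmt6_Nzero (h1 : ∀ i, B i i = 1) (h2 : ∀ i j : Fin n, j < i → B i j = 0)
    {i j : Fin n} (h : ¬ i < j) : (B - 1) i j = 0 := by
  rcases (not_lt.mp h).lt_or_eq with h' | h'
  · rw [Matrix.sub_apply, h2 i j h', Matrix.one_apply_ne h'.ne', sub_zero]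
  · subst h'
    rw [Matrix.sub_apply, h1, Matrix.one_apply_eq, sub_self]

lemma stmt6_Nlt {i j : Fin n} (h : i < j) : (B - 1) i j = B i j := by
  rw [Matrix.sub_apply, Matrix.one_apply_ne h.ne, sub_zero]

lemma stmt6_supp (h1 : ∀ i, B i i = 1) (h2 : ∀ i j : Fin n, j < i → B i j = 0) :
    ∀ (m : ℕ) (i j : Fin n), ((B - 1) ^ m) i j ≠ 0 → (i : ℕ) + m ≤ (j : ℕ) := by
  intro m
  induction m with
  | zero =>
    intro i j h
    rw [pow_zero] at h
    by_cases hij : i = j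
    · subst hij; omega
    · exact absurd (Matrix.one_apply_ne hij) h
  | succ m ih =>
    intro i j h
    rw [pow_succ, Matrix.mul_apply] at h
    obtain ⟨k, -, hk⟩ := Finset.exists_ne_zero_of_sum_ne_zero h
    have hk1 : ((B - 1) ^ m) i k ≠ 0 := left_ne_zero_of_mul hk
    have hk2 : (B - 1) k j ≠ 0 := right_ne_zero_of_mul hk
    have hkj : k < j := by
      by_contra h'
      exact hk2 (stmt6_Nzero B h1 h2 h')
    have h5 := ih i k hk1
    have h6 : (k : ℕ) < (j : ℕ) := hkj
    omega

lemma stmt6_nneg (h1 : ∀ i, B i i = 1) (h2 : ∀ i j : Fin n, j < i → B i j = 0)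
    (h3 : ∀ i j : Fin n, i < j → 0 ≤ B i j) :
    ∀ (m : ℕ) (i j : Fin n), 0 ≤ ((B - 1) ^ m) i j := by
  have hN : ∀ i j : Fin n, 0 ≤ (B - 1) i j := by
    intro i j
    by_cases hij : i < j
    · rw [stmt6_Nlt B hij]; exact h3 i j hij
    · rw [stmt6_Nzero B h1 h2 hij]
  intro m
  induction m with
  | zero =>
    intro i j
    rw [pow_zero, Matrix.one_apply]
    split <;> norm_num
  | succ m ih =>
    intro i j
    rw [pow_succ, Matrix.mul_apply]
    exact Finset.sum_nonneg fun k _ => mul_nonneg (ih i k) (hN k j)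

lemma stmt6_parity (h1 : ∀ i, B i i = 1) (h2 : ∀ i j : Fin n, j < i → B i j = 0)
    (h3 : ∀ i j : Fin n, i < j → 0 ≤ B i j) (c : Fin n → Bool)
    (hc : ∀ i j : Fin n, i < j → 1 ≤ B i j → c i ≠ c j) :
    ∀ (m : ℕ), 1 ≤ m → ∀ i j : Fin n, ((B - 1) ^ m) i j ≠ 0 →
      ((-1 : ℤ) ^ m = if c i = c j then 1 else -1) := by
  intro m hm
  induction m, hm using Nat.le_induction with
  | base =>
    intro i j h
    rw [pow_one] at h
    have hij : i < j := by
      by_contra h'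
      exact h (stmt6_Nzero B h1 h2 h')
    rw [stmt6_Nlt B hij] at h
    have hB : 1 ≤ B i j := by have := h3 i j hij; omega
    have hne := hc i j hij hB
    simp [hne]
  | succ m hm ih =>
    intro i j h
    rw [pow_succ', Matrix.mul_apply] at h
    obtain ⟨k, -, hk⟩ := Finset.exists_ne_zero_of_sum_ne_zero h
    have hk1 : (B - 1) i k ≠ 0 := left_ne_zero_of_mul hk
    have hk2 : ((B - 1) ^ m) k j ≠ 0 := right_ne_zero_of_mul hk
    have hik : i < k := by
      by_contra h'
      exact hk1 (stmt6_Nzero B h1 h2 h')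
    rw [stmt6_Nlt B hik] at hk1
    have hBik : 1 ≤ B i k := by have := h3 i k hik; omega
    have hc1 := hc i k hik hBik
    have hc2 := ih k j hk2
    rw [pow_succ]
    cases hci : c i <;> cases hcj : c j <;> cases hck : c k <;> simp_all

end Aux

/-- If `D` is bipartite, then `B` is signable and moreover
`B i j ≤ |(B⁻¹) i j|` for all `i < j` (`D` is a subgraph of its parity closure). -/
theorem stmt6 {n : ℕ} (hn : 1 ≤ n) (B : Matrix (Fin n) (Fin n) ℤ)
    (h1 : ∀ i, B i i = 1) (h2 : ∀ i j : Fin n, j < i → B i j = 0)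
    (h3 : ∀ i j : Fin n, i < j → 0 ≤ B i j)
    (hbip : ∃ c : Fin n → Bool, ∀ i j : Fin n, i < j → 1 ≤ B i j → c i ≠ c j) :
    IsSignable B⁻¹ ∧ ∀ i j : Fin n, i < j → B i j ≤ |B⁻¹ i j| := by
  obtain ⟨c, hc⟩ := hbip
  set N : Matrix (Fin n) (Fin n) ℤ := B - 1 with hNdef
  have hB1 : B = 1 + N := by rw [hNdef]; abel
  have hNn : N ^ n = 0 := by
    ext i j
    simp only [Matrix.zero_apply]
    by_contra h
    have h4 := stmt6_supp B h1 h2 n i j h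
    have h5 := j.isLt
    omega
  set C : Matrix (Fin n) (Fin n) ℤ := ∑ m ∈ Finset.range n, ((-1 : ℤ) ^ m) • N ^ m with hCdef
  have hBC : B * C = 1 := by
    have hterm : ∀ m : ℕ, B * (((-1 : ℤ) ^ m) • N ^ m)
        = ((-1 : ℤ) ^ m) • N ^ m - ((-1 : ℤ) ^ (m + 1)) • N ^ (m + 1) := by
      intro m
      have key : ((-1 : ℤ)) ^ (m + 1) • N ^ (m + 1) = -(((-1 : ℤ)) ^ m • (N * N ^ m)) := by
        rw [pow_succ, pow_succ', mul_neg_one, neg_smul]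
      rw [key, sub_neg_eq_add, hB1, add_mul, one_mul, mul_smul_comm]
    rw [hCdef, Finset.mul_sum]
    simp_rw [hterm]
    rw [Finset.sum_range_sub' (fun m => ((-1 : ℤ) ^ m) • N ^ m)]
    simp [hNn]
  have hinv : B⁻¹ = C := Matrix.inv_eq_right_inv hBC
  have hC : ∀ i j : Fin n, C i j = ∑ m ∈ Finset.range n, (-1 : ℤ) ^ m * ((N ^ m) i j) := by
    intro i j
    rw [hCdef]
    simp only [Matrix.sum_apply, Matrix.smul_apply, smul_eq_mul]
  have hupper : ∀ i j : Fin n, i < j →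
      C i j = (if c i = c j then (1 : ℤ) else -1) * ∑ m ∈ Finset.range n, (N ^ m) i j := by
    intro i j hij
    rw [hC, Finset.mul_sum]
    refine Finset.sum_congr rfl fun m _ => ?_
    by_cases hx : (N ^ m) i j = 0
    · rw [hx]; ring
    · rcases Nat.eq_zero_or_pos m with rfl | hm
      · exact absurd (by rw [pow_zero]; exact Matrix.one_apply_ne hij.ne) hx
      · rw [stmt6_parity B h1 h2 h3 c hc m hm i j hx]
  have hSnn : ∀ i j : Fin n, 0 ≤ ∑ m ∈ Finset.range n, (N ^ m) i j :=
    fun i j => Finset.sum_nonneg fun m _ => stmt6_nneg B h1 h2 h3 m i j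
  have hSB : ∀ i j : Fin n, i < j → B i j ≤ ∑ m ∈ Finset.range n, (N ^ m) i j := by
    intro i j hij
    have h1n : 1 ∈ Finset.range n := by
      have h4 := j.isLt
      have h5 : (i : ℕ) < (j : ℕ) := hij
      simp only [Finset.mem_range]
      omega
    have heq : B i j = (N ^ 1) i j := by rw [pow_one, hNdef, stmt6_Nlt B hij]
    rw [heq]
    exact Finset.single_le_sum (fun m _ => stmt6_nneg B h1 h2 h3 m i j) h1n
  have habsC : ∀ i j : Fin n, i < j → |C i j| = ∑ m ∈ Finset.range n, (N ^ m) i j := by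
    intro i j hij
    rw [hupper i j hij, abs_mul, abs_of_nonneg (hSnn i j)]
    have h4 : |(if c i = c j then (1 : ℤ) else -1)| = 1 := by split <;> norm_num
    rw [h4, one_mul]
  have hlower : ∀ i j : Fin n, ¬ i < j → i ≠ j → C i j = 0 := by
    intro i j hij hne
    rw [hC]
    refine Finset.sum_eq_zero fun m _ => ?_
    rcases Nat.eq_zero_or_pos m with rfl | hm
    · simp [Matrix.one_apply_ne hne]
    · have h4 : (N ^ m) i j = 0 := by
        by_contra h
        have h5 := stmt6_supp B h1 h2 m i j h
        have h6 : (j : ℕ) ≤ (i : ℕ) := not_lt.mp hij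
        omega
      simp [h4]
  have hdiag : ∀ i : Fin n, C i i = 1 := by
    intro i
    rw [hC, Finset.sum_eq_single 0]
    · simp
    · intro m hm hm0
      have h4 : (N ^ m) i i = 0 := by
        by_contra h
        have h5 := stmt6_supp B h1 h2 m i i h
        omega
      simp [h4]
    · intro h
      exact absurd (Finset.mem_range.mpr hn) h
  rw [hinv]
  constructor
  · set s : Fin n → ℤ := fun i => if c i then -1 else 1 with hs
    refine ⟨s, fun i => by by_cases h : c i <;> simp [hs, h], fun i j => ?_⟩
    rcases lt_trichotomy i j with h | h | h
    · rw [habsC i j h, hupper i j h]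
      have hsε : s i * (if c i = c j then (1 : ℤ) else -1) * s j = 1 := by
        cases hci : c i <;> cases hcj : c j <;> simp [hs, hci, hcj]
      calc s i * ((if c i = c j then (1 : ℤ) else -1) * ∑ m ∈ Finset.range n, (N ^ m) i j) * s j
          = (s i * (if c i = c j then (1 : ℤ) else -1) * s j) * ∑ m ∈ Finset.range n, (N ^ m) i j := by ring
        _ = ∑ m ∈ Finset.range n, (N ^ m) i j := by rw [hsε, one_mul]
    · subst h
      rw [hdiag i]
      by_cases hci : c i <;> simp [hs, hci]
    · rw [hlower i j (lt_asymm h) h.ne']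
      simp
  · intro i j hij
    rw [habsC i j hij]
    exact hSB i j hij
end

section
/- The following are equivalent: (i) D and D⁺ are both bipartite; (ii) (B−I)² = 0 (there is no directed path of length greater than one in D); (iii) B_{i,j} = |(B⁻¹)_{i,j}| for all i < j (i.e., D = D⁺) and D is bipartite. -/
open Matrix

section aux
variable {n : ℕ}

lemma npow_supp (N : Matrix (Fin n) (Fin n) ℤ)
    (hA : ∀ i j : Fin n, ¬ i < j → N i j = 0) :
    ∀ m (i j : Fin n), (N ^ m) i j ≠ 0 → (i : ℕ) + m ≤ (j : ℕ) := by
  intro m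
  induction m with
  | zero =>
    intro i j h
    rw [pow_zero] at h
    by_cases hij : i = j
    · subst hij; omega
    · simp [Matrix.one_apply_ne hij] at h
  | succ m ih =>
    intro i j h
    rw [pow_succ, Matrix.mul_apply] at h
    obtain ⟨l, -, hl⟩ := Finset.exists_ne_zero_of_sum_ne_zero h
    have hf1 : (N ^ m) i l ≠ 0 := fun hz => hl (by simp [hz])
    have hf2 : N l j ≠ 0 := fun hz => hl (by simp [hz])
    have h1 := ih i l hf1
    have hlj : l < j := by by_contra hc; exact hf2 (hA _ _ hc)
    have : (l : ℕ) < (j : ℕ) := hlj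
    omega

lemma npow_nonneg (N : Matrix (Fin n) (Fin n) ℤ)
    (hB : ∀ i j : Fin n, 0 ≤ N i j) :
    ∀ m (i j : Fin n), 0 ≤ (N ^ m) i j := by
  intro m
  induction m with
  | zero =>
    intro i j
    rw [pow_zero]
    by_cases hij : i = j
    · subst hij; simp
    · simp [Matrix.one_apply_ne hij]
  | succ m ih =>
    intro i j
    rw [pow_succ, Matrix.mul_apply]
    exact Finset.sum_nonneg fun l _ => mul_nonneg (ih i l) (hB l j)

lemma npow_top (N : Matrix (Fin n) (Fin n) ℤ)
    (hA : ∀ i j : Fin n, ¬ i < j → N i j = 0) : N ^ n = 0 := by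
  ext i j
  by_contra hz
  have := npow_supp N hA n i j hz
  have := j.isLt
  omega

lemma Binv_eq (B : Matrix (Fin n) (Fin n) ℤ)
    (hA : ∀ i j : Fin n, ¬ i < j → (B - 1) i j = 0) :
    B⁻¹ = ∑ m ∈ Finset.range n, ((-1 : ℤ) ^ m) • (B - 1) ^ m := by
  apply Matrix.inv_eq_right_inv
  have hNn : (B - 1) ^ n = 0 := npow_top _ hA
  have key := mul_geom_sum (-(B - 1)) n
  have hpow : (-(B - 1)) ^ n = 0 := by
    rw [show -(B-1) = (-1 : ℤ) • (B - 1) by simp, smul_pow, hNn, smul_zero]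
  rw [hpow] at key
  have hS : ∑ i ∈ Finset.range n, (-(B - 1)) ^ i
      = ∑ m ∈ Finset.range n, ((-1 : ℤ) ^ m) • (B - 1) ^ m := by
    apply Finset.sum_congr rfl
    intro m _
    rw [show -(B-1) = (-1 : ℤ) • (B - 1) by simp, smul_pow]
  rw [← hS]
  calc B * ∑ i ∈ Finset.range n, (-(B - 1)) ^ i
      = -((-(B - 1) - 1) * ∑ i ∈ Finset.range n, (-(B - 1)) ^ i) := by noncomm_ring
    _ = -(0 - 1) := by rw [key]
    _ = 1 := by simp

lemma parity_lemma (N : Matrix (Fin n) (Fin n) ℤ)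
    (hA : ∀ i j : Fin n, ¬ i < j → N i j = 0)
    (s : Fin n → ℤ) (hs : ∀ i, s i * s i = 1)
    (he : ∀ i j : Fin n, i < j → N i j ≠ 0 → s i * s j = -1) :
    ∀ m (i j : Fin n), (N ^ m) i j ≠ 0 → s i * s j = (-1 : ℤ) ^ m := by
  intro m
  induction m with
  | zero =>
    intro i j h
    rw [pow_zero] at h
    by_cases hij : i = j
    · subst hij; simpa using hs i
    · simp [Matrix.one_apply_ne hij] at h
  | succ m ih =>
    intro i j h
    rw [pow_succ, Matrix.mul_apply] at h
    obtain ⟨l, -, hl⟩ := Finset.exists_ne_zero_of_sum_ne_zero h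
    have hf1 : (N ^ m) i l ≠ 0 := fun hz => hl (by simp [hz])
    have hf2 : N l j ≠ 0 := fun hz => hl (by simp [hz])
    have hlj : l < j := by by_contra hc; exact hf2 (hA _ _ hc)
    have e1 := ih i l hf1
    have e2 := he l j hlj hf2
    have key : s i * s j = (s i * s l) * (s l * s j) := by
      have h := hs l
      calc s i * s j = s i * s j * (s l * s l) := by rw [h]; ring
        _ = (s i * s l) * (s l * s j) := by ring
    rw [key, e1, e2, pow_succ]


section aux2
variable {n : ℕ}

lemma abs_inv_entry (B : Matrix (Fin n) (Fin n) ℤ)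
    (hA : ∀ i j : Fin n, ¬ i < j → (B - 1) i j = 0)
    (hB : ∀ i j : Fin n, 0 ≤ (B - 1) i j)
    (c : Fin n → Bool)
    (hc : ∀ i j : Fin n, i < j → (B - 1) i j ≠ 0 → c i ≠ c j)
    (i j : Fin n) (hij : i < j) :
    |B⁻¹ i j| = ∑ m ∈ Finset.range n, ((B - 1) ^ m) i j := by
  set s : Fin n → ℤ := fun i => if c i then 1 else -1 with hsdef
  have hs : ∀ i, s i * s i = 1 := by intro i; by_cases h : c i <;> simp [hsdef, h]
  have he : ∀ a b : Fin n, a < b → (B - 1) a b ≠ 0 → s a * s b = -1 := by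
    intro a b hab hz
    have hne := hc a b hab hz
    cases hca : c a <;> cases hcb : c b
    · exact absurd (hca.trans hcb.symm) hne
    · simp [hsdef, hca, hcb]
    · simp [hsdef, hca, hcb]
    · exact absurd (hca.trans hcb.symm) hne
  have hpar := parity_lemma (B - 1) hA s hs he
  have hentry : B⁻¹ i j = (s i * s j) * ∑ m ∈ Finset.range n, ((B - 1) ^ m) i j := by
    rw [Binv_eq B hA, Matrix.sum_apply, Finset.mul_sum]
    apply Finset.sum_congr rfl
    intro m _
    rw [Matrix.smul_apply, smul_eq_mul]
    by_cases hz : ((B - 1) ^ m) i j = 0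
    · rw [hz]; ring
    · rw [← hpar m i j hz]
  rw [hentry, abs_mul]
  have hone : |s i * s j| = 1 := by
    by_cases hca : c i <;> by_cases hcb : c j <;> simp [hsdef, hca, hcb]
  have hpos : 0 ≤ ∑ m ∈ Finset.range n, ((B - 1) ^ m) i j :=
    Finset.sum_nonneg fun m _ => npow_nonneg _ hB m i j
  rw [hone, one_mul, abs_of_nonneg hpos]

end aux2

lemma bool_trans_ne {a b c : Bool} (h1 : a ≠ b) (h2 : b ≠ c) : a = c := by
  cases a <;> cases b <;> cases c <;> simp_all


/-- The following are equivalent: (i) `D` and `D⁺` are both bipartite;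
(ii) `(B - I)² = 0` (no directed path of length greater than one);
(iii) `B i j = |(B⁻¹) i j|` for all `i < j` (`D = D⁺`) and `D` is bipartite. -/
theorem stmt9 {n : ℕ} (hn : 1 ≤ n) (B : Matrix (Fin n) (Fin n) ℤ)
    (h1 : ∀ i, B i i = 1) (h2 : ∀ i j : Fin n, j < i → B i j = 0)
    (h3 : ∀ i j : Fin n, i < j → 0 ≤ B i j) :
    (((∃ c : Fin n → Bool, ∀ i j : Fin n, i < j → 1 ≤ B i j → c i ≠ c j) ∧
        (∃ c : Fin n → Bool, ∀ i j : Fin n, i < j → B⁻¹ i j ≠ 0 → c i ≠ c j)) ↔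
      (B - 1) ^ 2 = 0) ∧
    ((B - 1) ^ 2 = 0 ↔
      ((∀ i j : Fin n, i < j → B i j = |B⁻¹ i j|) ∧
        ∃ c : Fin n → Bool, ∀ i j : Fin n, i < j → 1 ≤ B i j → c i ≠ c j)) := by
  -- basic facts about N = B - 1
  have hA : ∀ i j : Fin n, ¬ i < j → (B - 1) i j = 0 := by
    intro i j h
    by_cases hij : i = j
    · subst hij; simp [Matrix.sub_apply, h1]
    · have hji : j < i := lt_of_le_of_ne (not_lt.mp h) (fun e => hij e.symm)
      simp [Matrix.sub_apply, Matrix.one_apply_ne hij, h2 i j hji]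
  have hEq : ∀ i j : Fin n, i < j → (B - 1) i j = B i j := by
    intro i j hij
    simp [Matrix.sub_apply, Matrix.one_apply_ne (ne_of_lt hij)]
  have hB : ∀ i j : Fin n, 0 ≤ (B - 1) i j := by
    intro i j
    by_cases hij : i < j
    · rw [hEq i j hij]; exact h3 i j hij
    · rw [hA i j hij]
  have hedge : ∀ i j : Fin n, i < j → ((B - 1) i j ≠ 0 ↔ 1 ≤ B i j) := by
    intro i j hij
    rw [hEq i j hij]
    constructor
    · intro h; have := h3 i j hij; omega
    · intro h; omega
  -- consequences of (B-1)^2 = 0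
  have sq_imp : (B - 1) ^ 2 = 0 →
      (∀ i j : Fin n, i < j → B⁻¹ i j = -(B i j)) ∧
      (∃ c : Fin n → Bool, ∀ i j : Fin n, i < j → 1 ≤ B i j → c i ≠ c j) := by
    intro hsq
    constructor
    · intro i j hij
      have hinv : B⁻¹ = 1 - (B - 1) := by
        apply Matrix.inv_eq_right_inv
        calc B * (1 - (B - 1)) = 1 - (B - 1) ^ 2 := by noncomm_ring
          _ = 1 := by rw [hsq, sub_zero]
      rw [hinv, Matrix.sub_apply, Matrix.one_apply_ne (ne_of_lt hij), hEq i j hij]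
      ring
    · -- no path of length two
      have no2 : ∀ i j k : Fin n, i < j → j < k → 1 ≤ B i j → 1 ≤ B j k → False := by
        intro i j k hij hjk hb1 hb2
        have e : ((B - 1) ^ 2 : Matrix (Fin n) (Fin n) ℤ) i k = 0 := by
          rw [hsq]; exact Matrix.zero_apply i k
        rw [pow_two, Matrix.mul_apply] at e
        have hle := Finset.single_le_sum
          (f := fun l => (B - 1) i l * (B - 1) l k)
          (fun l _ => mul_nonneg (hB i l) (hB l k)) (Finset.mem_univ j)
        rw [e] at hle
        have hle' : (B - 1) i j * (B - 1) j k ≤ 0 := by simpa using hle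
        rw [hEq i j hij, hEq j k hjk] at hle'
        nlinarith
      refine ⟨fun i => decide (∃ j, i < j ∧ 1 ≤ B i j), ?_⟩
      intro i j hij hbij
      have hci : decide (∃ k, i < k ∧ 1 ≤ B i k) = true :=
        decide_eq_true ⟨j, hij, hbij⟩
      have hcj : decide (∃ k, j < k ∧ 1 ≤ B j k) = false := by
        rw [decide_eq_false_iff_not]
        rintro ⟨k, hk1, hk2⟩
        exact no2 i j k hij hk1 hbij hk2
      simp [hci, hcj]
  constructor
  · constructor
    · -- (i) → (ii)
      rintro ⟨⟨c, hc⟩, ⟨c', hc'⟩⟩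
      have hcN : ∀ i j : Fin n, i < j → (B - 1) i j ≠ 0 → c i ≠ c j := by
        intro i j hij hz
        exact hc i j hij ((hedge i j hij).mp hz)
      have habs := abs_inv_entry B hA hB c hcN
      have dpedge : ∀ a b : Fin n, a < b → ∀ m : ℕ, m ∈ Finset.range n →
          ((B - 1) ^ m) a b ≠ 0 → B⁻¹ a b ≠ 0 := by
        intro a b hab m hm hz
        have hle := Finset.single_le_sum
          (f := fun m => ((B - 1) ^ m) a b)
          (fun m _ => npow_nonneg _ hB m a b) hm
        have hnn := npow_nonneg _ hB m a b
        have h1 : 0 < ((B - 1) ^ m) a b := lt_of_le_of_ne hnn (Ne.symm hz)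
        have habs' := habs a b hab
        have hle' : ((B - 1) ^ m) a b ≤ ∑ m ∈ Finset.range n, ((B - 1) ^ m) a b := by
          simpa using hle
        intro hzero
        rw [hzero, abs_zero] at habs'
        linarith
      ext i j
      rw [Matrix.zero_apply]
      by_contra hz
      have hsupp := npow_supp (B - 1) hA 2 i j hz
      have hij : i < j := Fin.lt_def.mpr (by omega)
      have hjlt := j.isLt
      have h2mem : (2 : ℕ) ∈ Finset.range n := Finset.mem_range.mpr (by omega)
      have h1mem : (1 : ℕ) ∈ Finset.range n := Finset.mem_range.mpr (by omega)
      have hij' : B⁻¹ i j ≠ 0 := dpedge i j hij 2 h2mem hz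
      have hz' := hz
      rw [pow_two, Matrix.mul_apply] at hz'
      obtain ⟨v, -, hv⟩ := Finset.exists_ne_zero_of_sum_ne_zero hz'
      have hf1 : (B - 1) i v ≠ 0 := fun e => hv (by rw [e, zero_mul])
      have hf2 : (B - 1) v j ≠ 0 := fun e => hv (by rw [e, mul_zero])
      have hiv : i < v := by by_contra hcon; exact hf1 (hA _ _ hcon)
      have hvj : v < j := by by_contra hcon; exact hf2 (hA _ _ hcon)
      have hiv' : B⁻¹ i v ≠ 0 :=
        dpedge i v hiv 1 h1mem (by rw [pow_one]; exact hf1)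
      have hvj' : B⁻¹ v j ≠ 0 :=
        dpedge v j hvj 1 h1mem (by rw [pow_one]; exact hf2)
      have e1 := hc' i v hiv hiv'
      have e2 := hc' v j hvj hvj'
      have e3 := hc' i j hij hij'
      exact e3 (bool_trans_ne e1 e2)
    · -- (ii) → (i)
      intro hsq
      obtain ⟨hinvE, c, hc⟩ := sq_imp hsq
      refine ⟨⟨c, hc⟩, ⟨c, ?_⟩⟩
      intro i j hij hz
      rw [hinvE i j hij] at hz
      have : B i j ≠ 0 := fun e => hz (by rw [e]; ring)
      have := h3 i j hij
      exact hc i j hij (by omega)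
  · constructor
    · -- (ii) → (iii)
      intro hsq
      obtain ⟨hinvE, c, hc⟩ := sq_imp hsq
      refine ⟨?_, c, hc⟩
      intro i j hij
      rw [hinvE i j hij, abs_neg, abs_of_nonneg (h3 i j hij)]
    · -- (iii) → (ii)
      rintro ⟨heq, c, hc⟩
      have hcN : ∀ i j : Fin n, i < j → (B - 1) i j ≠ 0 → c i ≠ c j := by
        intro i j hij hz
        exact hc i j hij ((hedge i j hij).mp hz)
      have habs := abs_inv_entry B hA hB c hcN
      ext i j
      rw [Matrix.zero_apply]
      by_contra hz
      have hsupp := npow_supp (B - 1) hA 2 i j hz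
      have hij : i < j := Fin.lt_def.mpr (by omega)
      have hjlt := j.isLt
      have hsubset : ({1, 2} : Finset ℕ) ⊆ Finset.range n := by
        intro m hm
        simp only [Finset.mem_insert, Finset.mem_singleton] at hm
        rw [Finset.mem_range]
        omega
      have hle : ∑ m ∈ ({1, 2} : Finset ℕ), ((B - 1) ^ m) i j ≤
          ∑ m ∈ Finset.range n, ((B - 1) ^ m) i j :=
        Finset.sum_le_sum_of_subset_of_nonneg hsubset
          (fun m _ _ => npow_nonneg _ hB m i j)
      rw [Finset.sum_pair (by norm_num : (1:ℕ) ≠ 2), pow_one] at hle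
      have hBij := heq i j hij
      rw [habs i j hij] at hBij
      have hBij' := hEq i j hij
      have hnn := npow_nonneg _ hB 2 i j
      have hpos2 : 0 < ((B - 1) ^ 2 : Matrix (Fin n) (Fin n) ℤ) i j :=
        lt_of_le_of_ne hnn (Ne.symm hz)
      linarith
end aux
end
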